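/- Consider the two-layer drive-response networked sampled-data system under the Fast Control sampling pattern with integer l ≥ 1 (transmission channels sampled with period l·h, control channels with period h): define Φ̃^{1,1} = I_N ⊗ e^{A^1 l h} + W^1 ⊗ 𝓗^1(lh), Φ̃^{2,2} = I_N ⊗ e^{A^2 l h} + W^2 ⊗ 𝓗^2(lh), Φ̃^{2,1} = D^{2,1} ⊗ 𝓟^{2,1}(lh), Ψ̃^{K,K} = [Δ^K ⊗ (𝓑^K(lh) − 𝓑^K((l−1)h)), …, Δ^K ⊗ (𝓑^K(2h) − 𝓑^K(h)), Δ^K ⊗ 𝓑^K(h)] for K = 1,2, Φ̃_s = [[Φ̃^{1,1}, 0], [Φ̃^{2,1}, Φ̃^{2,2}]], Ψ̃_s = diag(Ψ̃^{1,1}, Ψ̃^{2,2}). Suppose: (1) for every μ ∈ ℂ and every nonzero row vector η ∈ ℂ^{1×Nn} with η Φ̃^{1,1} = μ η, one has η·[Δ^1 ⊗ 𝓑^1(lh), Δ^1 ⊗ 𝓑^1((l−1)h), …, Δ^1 ⊗ 𝓑^1(h)] ≠ 0; and (2) for every μ ∈ ℂ, every nonzero η ∈ ℂ^{1×Nn}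 with η Φ̃^{2,2} = μ η, and every ξ ∈ ℂ^{1×Nn} with ξ(μ I_{Nn} − Φ̃^{1,1}) = η Φ̃^{2,1}, the concatenated row vector [ξ·[Δ^1 ⊗ 𝓑^1(lh), …, Δ^1 ⊗ 𝓑^1(h)], η·[Δ^2 ⊗ 𝓑^2(lh), …, Δ^2 ⊗ 𝓑^2(h)]] is nonzero. Then the discrete-time system x(k+1) = Φ̃_s x(k) + Ψ̃_s u(k) is controllable. -/

import Mathlib

open Matrix
open scoped Kronecker

/-- Matrix exponential of a real square matrix. -/
noncomputable def matExp {k : Type*} [Fintype k] [DecidableEq k]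
    (A : Matrix k k ℝ) : Matrix k k ℝ := NormedSpace.exp A

/-- Entrywise integral `∫₀ʰ e^{Aτ} dτ`. -/
noncomputable def intExp {k : Type*} [Fintype k] [DecidableEq k]
    (A : Matrix k k ℝ) (h : ℝ) : Matrix k k ℝ :=
  Matrix.of fun i j => ∫ τ in (0:ℝ)..h, matExp (τ • A) i j

/-- A real matrix regarded as a complex matrix entrywise. -/
def cmap {a b : Type*} (M : Matrix a b ℝ) : Matrix a b ℂ := M.map Complex.ofReal

/-- `θ` is a (complex) eigenvalue of the complex matrix `M`. -/
def IsEig {k : Type*} [Fintype k] (M : Matrix k k ℂ) (θ : ℂ) : Prop :=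
  ∃ v : k → ℂ, v ≠ 0 ∧ M.mulVec v = θ • v

/-- Controllability of the discrete-time linear system `x(k+1) = F x(k) + G u(k)`:
every target state can be reached from every initial state in finite time. -/
def Controllable {q r : Type*} [Fintype q] [Fintype r]
    (F : Matrix q q ℝ) (G : Matrix q r ℝ) : Prop :=
  ∀ x₀ xf : q → ℝ, ∃ (T : ℕ) (u : ℕ → r → ℝ) (x : ℕ → q → ℝ),
    x 0 = x₀ ∧ (∀ k, x (k + 1) = F.mulVec (x k) + G.mulVec (u k)) ∧ x T = xf

section Aux

variable {q r : Type*} [Fintype q] [DecidableEq q] [Fintype r]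

lemma cvec_vecMul (v : q → ℝ) (M : Matrix q r ℝ) :
    (fun i => ((v i : ℂ))) ᵥ* cmap M = fun j => (((v ᵥ* M) j : ℝ) : ℂ) := by
  ext j
  simp only [Matrix.vecMul, dotProduct, cmap, Matrix.map_apply]
  push_cast
  rfl

lemma cmap_mul {a b c : Type*} [Fintype b] (M : Matrix a b ℝ) (N : Matrix b c ℝ) :
    cmap (M * N) = cmap M * cmap N := by
  ext i j
  simp only [cmap, Matrix.map_apply, Matrix.mul_apply]
  push_cast
  rfl

lemma cmap_pow (M : Matrix q q ℝ) (k : ℕ) : cmap (M ^ k) = cmap M ^ k := by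
  induction k with
  | zero =>
      ext i j
      simp [cmap, Matrix.one_apply, apply_ite]
  | succ k ih => rw [pow_succ, pow_succ, cmap_mul, ih]

/-- PBH eigenvector test (over ℂ) implies controllability of a real discrete-time system. -/
theorem pbh_controllable (F : Matrix q q ℝ) (G : Matrix q r ℝ)
    (hpbh : ∀ (μ : ℂ) (η : q → ℂ), η ≠ 0 → η ᵥ* cmap F = μ • η → η ᵥ* cmap G ≠ 0) :
    Controllable F G := by
  classical
  set R : ℕ → Submodule ℝ (q → ℝ) := fun k => LinearMap.range (F ^ k * G).mulVecLin with hR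
  -- Step 1: the reachability subspace is everything.
  have htop : (⨆ k, R k) = ⊤ := by
    by_contra hne
    obtain ⟨f, hf0, hfmap⟩ :=
      Submodule.exists_dual_map_eq_bot_of_lt_top (lt_top_iff_ne_top.mpr hne) inferInstance
    set η : q → ℝ := fun i => f (fun j => if i = j then 1 else 0) with hηdef
    have hfapp : ∀ v : q → ℝ, f v = ∑ i, v i * η i := by
      intro v
      rw [LinearMap.pi_apply_eq_sum_univ f v]
      exact Finset.sum_congr rfl fun i _ => by rw [smul_eq_mul]
    have hη0 : η ≠ 0 := by
      intro h0
      apply hf0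
      apply LinearMap.ext
      intro v
      rw [hfapp]
      simp [funext_iff.mp h0]
    have hann : ∀ k : ℕ, η ᵥ* (F ^ k * G) = 0 := by
      intro k
      ext c
      have hcol : (fun i => (F ^ k * G) i c) ∈ ⨆ k, R k := by
        refine le_iSup R k ⟨Pi.single c 1, ?_⟩
        ext i
        rw [Matrix.mulVecLin_apply, Matrix.mulVec_single]
        simp
      have hcol0 : f (fun i => (F ^ k * G) i c) = 0 := by
        have := Submodule.mem_map_of_mem (f := f) hcol
        rw [hfmap, Submodule.mem_bot] at this
        exact this
      rw [hfapp] at hcol0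
      simp only [Matrix.vecMul, dotProduct, Pi.zero_apply]
      rw [← hcol0]
      exact Finset.sum_congr rfl fun i _ => mul_comm _ _
    -- complexify and find a left eigenvector
    set ηc : q → ℂ := fun i => ((η i : ℝ) : ℂ) with hηc
    have hηc0 : ηc ≠ 0 := by
      intro hcon
      apply hη0
      ext i
      have := congrFun hcon i
      simpa [hηc, Complex.ofReal_eq_zero] using this
    set Fc : Matrix q q ℂ := cmap F with hFc
    set U : Submodule ℂ (q → ℂ) := Submodule.span ℂ (Set.range fun k : ℕ => ηc ᵥ* Fc ^ k)
      with hU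
    have hmemU : ∀ k : ℕ, ηc ᵥ* Fc ^ k ∈ U := fun k => Submodule.subset_span ⟨k, rfl⟩
    have hT : ∀ x ∈ U, Fc.vecMulLinear x ∈ U := by
      intro x hx
      have hUle : U.map Fc.vecMulLinear ≤ U := by
        rw [hU, Submodule.map_span, Submodule.span_le]
        rintro _ ⟨_, ⟨k, rfl⟩, rfl⟩
        have : Fc.vecMulLinear (ηc ᵥ* Fc ^ k) = ηc ᵥ* Fc ^ (k + 1) := by
          rw [Matrix.vecMulLinear_apply, Matrix.vecMul_vecMul, ← pow_succ]
        rw [this]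
        exact hmemU (k + 1)
      exact hUle (Submodule.mem_map_of_mem hx)
    have hηcU : ηc ∈ U := by
      have := hmemU 0
      rwa [pow_zero, Matrix.vecMul_one] at this
    have : Nontrivial U := by
      refine ⟨⟨ηc, hηcU⟩, 0, ?_⟩
      intro hcon
      exact hηc0 (by simpa using congrArg Subtype.val hcon)
    obtain ⟨μ, hμ⟩ := Module.End.exists_eigenvalue (Fc.vecMulLinear.restrict hT)
    obtain ⟨v, hv⟩ := hμ.exists_hasEigenvector
    have hveq : (v : q → ℂ) ᵥ* Fc = μ • (v : q → ℂ) := by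
      have := congrArg Subtype.val hv.apply_eq_smul
      rw [LinearMap.restrict_coe_apply] at this
      rw [← Matrix.vecMulLinear_apply]
      exact this
    have hv0 : (v : q → ℂ) ≠ 0 := by
      intro hcon
      exact hv.2 (Subtype.ext hcon)
    have hGv : (v : q → ℂ) ᵥ* cmap G = 0 := by
      have hker : U ≤ LinearMap.ker (cmap G).vecMulLinear := by
        rw [hU, Submodule.span_le]
        rintro _ ⟨k, rfl⟩
        simp only [SetLike.mem_coe, LinearMap.mem_ker, Matrix.vecMulLinear_apply]
        rw [Matrix.vecMul_vecMul, hFc, ← cmap_pow, ← cmap_mul, hηc, cvec_vecMul, hann k]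
        ext j
        simp
      have := hker v.2
      rwa [LinearMap.mem_ker, Matrix.vecMulLinear_apply] at this
    exact hpbh μ v hv0 hveq hGv
  -- Step 2: extract a uniform horizon T.
  have hcpt : IsCompactElement (⊤ : Submodule ℝ (q → ℝ)) :=
    (Submodule.fg_iff_compact _).mp (Module.finite_def.mp inferInstance)
  obtain ⟨s, hs⟩ := CompleteLattice.IsCompactElement.exists_finset_of_le_iSup _ hcpt R (le_of_eq htop.symm)
  set T : ℕ := s.sup id + 1 with hT
  have hall : ∀ z : q → ℝ, z ∈ ⨆ k ∈ Finset.range T, R k := by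
    intro z
    refine (hs.trans (biSup_mono ?_)) Submodule.mem_top
    intro i hi
    have : i ≤ s.sup id := Finset.le_sup (f := id) hi
    exact Finset.mem_range.mpr (Nat.lt_succ_of_le this)
  -- Step 3: construct the trajectory.
  intro x₀ xf
  set z : q → ℝ := xf - (F ^ T).mulVec x₀ with hz
  obtain ⟨w, hw⟩ := (Submodule.mem_iSup_finset_iff_exists_sum R z).mp (hall z)
  have hchoice : ∀ k : ℕ, ∃ u : r → ℝ, (F ^ k * G).mulVec u = (w k : q → ℝ) := by
    intro k
    obtain ⟨u, hu⟩ := (w k).2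
    exact ⟨u, by rw [← Matrix.mulVecLin_apply]; exact hu⟩
  choose wv hwv using hchoice
  set u : ℕ → r → ℝ := fun j => wv (T - 1 - j) with hu
  set x : ℕ → q → ℝ := fun k => Nat.rec x₀ (fun k xk => F.mulVec xk + G.mulVec (u k)) k
    with hx
  have hformula : ∀ j : ℕ, x j = (F ^ j).mulVec x₀ +
      ∑ k ∈ Finset.range j, (F ^ k * G).mulVec (u (j - 1 - k)) := by
    intro j
    induction j with
    | zero => simp [hx]
    | succ j ih =>
        have hstep : x (j + 1) = F.mulVec (x j) + G.mulVec (u j) := rfl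
        rw [hstep, ih, Matrix.mulVec_add, Finset.sum_range_succ']
        have hFsum : F.mulVec (∑ k ∈ Finset.range j, (F ^ k * G).mulVec (u (j - 1 - k)))
            = ∑ k ∈ Finset.range j, (F ^ (k + 1) * G).mulVec (u (j - 1 - k)) := by
          rw [← Matrix.mulVecLin_apply, map_sum]
          refine Finset.sum_congr rfl fun k _ => ?_
          rw [Matrix.mulVecLin_apply, Matrix.mulVec_mulVec, ← Matrix.mul_assoc, ← pow_succ']
        rw [hFsum]
        have h1 : ∀ k : ℕ, j + 1 - 1 - (k + 1) = j - 1 - k := by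
          intro k; omega
        have h4 : ∑ k ∈ Finset.range j, (F ^ (k + 1) * G).mulVec (u (j + 1 - 1 - (k + 1)))
            = ∑ k ∈ Finset.range j, (F ^ (k + 1) * G).mulVec (u (j - 1 - k)) :=
          Finset.sum_congr rfl fun k _ => by rw [h1 k]
        have h2 : (F ^ (0:ℕ) * G).mulVec (u (j + 1 - 1 - 0)) = G.mulVec (u j) := by
          rw [pow_zero, Matrix.one_mul]
          norm_num
        have h3 : (F ^ (j + 1)).mulVec x₀ = F.mulVec ((F ^ j).mulVec x₀) := by
          rw [Matrix.mulVec_mulVec, ← pow_succ']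
        rw [h4, h2, h3]
        abel
  refine ⟨T, u, x, rfl, fun k => rfl, ?_⟩
  rw [hformula T]
  have hsum : ∑ k ∈ Finset.range T, (F ^ k * G).mulVec (u (T - 1 - k)) = z := by
    rw [← hw]
    refine Finset.sum_congr rfl fun k hk => ?_
    have hk' : k < T := Finset.mem_range.mp hk
    have : T - 1 - (T - 1 - k) = k := by omega
    rw [hu]
    simp only [this]
    exact hwv k
  rw [hsum, hz]
  abel

end Aux

section ThetaPsi

lemma intExp_zero {k : Type*} [Fintype k] [DecidableEq k] (A : Matrix k k ℝ) :
    intExp A 0 = 0 := by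
  ext i j
  simp [intExp]

/-- If a vector annihilates the lifted (differenced) input matrix, it annihilates the
concatenation `[Δ ⊗ 𝓑(lh), …, Δ ⊗ 𝓑(h)]`. -/
lemma theta_zero_of_psi_zero {N n p l : ℕ} (hl : 1 ≤ l)
    (A : Matrix (Fin n) (Fin n) ℝ) (B : Matrix (Fin n) (Fin p) ℝ)
    (Δ : Matrix (Fin N) (Fin N) ℝ) (h : ℝ)
    (ξ : Fin N × Fin n → ℂ)
    (hξ : ξ ᵥ* cmap ((Matrix.of fun a q =>
      if (q.1 : ℕ) = l - 1 then (Δ ⊗ₖ (intExp A h * B)) a q.2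
      else (Δ ⊗ₖ ((intExp A ((↑(l - (q.1 : ℕ)) : ℝ) * h)
        - intExp A ((↑(l - 1 - (q.1 : ℕ)) : ℝ) * h)) * B)) a q.2 :
        Matrix (Fin N × Fin n) (Fin l × (Fin N × Fin p)) ℝ)) = 0) :
    ξ ᵥ* cmap ((Matrix.of fun a q =>
      (Δ ⊗ₖ (intExp A ((↑(l - (q.1 : ℕ)) : ℝ) * h) * B)) a q.2 :
        Matrix (Fin N × Fin n) (Fin l × (Fin N × Fin p)) ℝ)) = 0 := by
  classical
  set g : ℕ → (Fin N × Fin p) → ℂ :=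
    fun t => ξ ᵥ* cmap (Δ ⊗ₖ (intExp A ((↑(l - t) : ℝ) * h) * B)) with hg
  have hgl : g l = 0 := by
    rw [hg]
    simp only [Nat.sub_self, Nat.cast_zero, zero_mul, intExp_zero, Matrix.zero_mul]
    ext c
    simp [cmap, Matrix.vecMul, dotProduct]
  -- block structure of the hypothesis
  have hblock : ∀ (t : ℕ) (ht : t < l), g t - g (t + 1) = 0 := by
    intro t ht
    ext c
    simp only [Pi.sub_apply, Pi.zero_apply]
    have h0 : (0:ℂ) = 0 := rfl
    have hcol : (ξ ᵥ* cmap ((Matrix.of fun a q =>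
        if (q.1 : ℕ) = l - 1 then (Δ ⊗ₖ (intExp A h * B)) a q.2
        else (Δ ⊗ₖ ((intExp A ((↑(l - (q.1 : ℕ)) : ℝ) * h)
          - intExp A ((↑(l - 1 - (q.1 : ℕ)) : ℝ) * h)) * B)) a q.2 :
          Matrix (Fin N × Fin n) (Fin l × (Fin N × Fin p)) ℝ))) (⟨t, ht⟩, c) = 0 := by
      rw [hξ]
      rfl
    by_cases hcase : t = l - 1
    · -- last block: Ψ entry is Δ ⊗ 𝓑(h), and g (t+1) = g l = 0
      have ht1 : t + 1 = l := by omega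
      have hlt : l - t = 1 := by omega
      have hgt : g t c = 0 := by
        rw [← hcol, hg]
        simp only [hlt, Nat.cast_one, one_mul]
        simp [cmap, Matrix.vecMul, dotProduct, hcase]
      rw [hgt, ht1, hgl]
      simp
    · -- middle block: Ψ entry is a difference
      have hsub : l - 1 - t = l - (t + 1) := by omega
      rw [← hcol, hg]
      simp only [hsub]
      simp [cmap, Matrix.vecMul, dotProduct, hcase, Matrix.sub_mul,
        Matrix.sub_apply, mul_sub, Finset.sum_sub_distrib]
      rw [congrArg (Nat.cast (R := ℝ)) hsub.symm, Nat.cast_sub ht.le]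
  have hgal : ∀ d : ℕ, d ≤ l → g (l - d) = 0 := by
    intro d
    induction d with
    | zero => intro _; simpa using hgl
    | succ d ih =>
        intro hd
        have hlt : l - (d + 1) < l := by omega
        have h1 : l - (d + 1) + 1 = l - d := by omega
        have := hblock (l - (d + 1)) hlt
        rw [h1] at this
        rw [ih (by omega)] at this
        simpa [sub_eq_zero] using this
  ext ⟨⟨t, ht⟩, c⟩
  have := hgal (l - t) (by omega)
  have h2 : l - (l - t) = t := by omega
  rw [h2] at this
  have hgt : g t c = 0 := by rw [this]; rfl
  simp only [Pi.zero_apply]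
  rw [← hgt, hg]
  simp [cmap, Matrix.vecMul, dotProduct]
  rw [Nat.cast_sub ht.le]

end ThetaPsi

/-- sufficient controllability condition for the two-layer drive-response
networked sampled-data system under the Fast Control sampling pattern (Corollary 6 in the
paper): transmission channels are sampled with period `l·h`, control channels with period
`h`. Column block `r` (for `r = 0, …, l−1`, left to right) of the lifted input matrix of
layer `K` is `Δ^K ⊗ (𝓑^K((l−r)h) − 𝓑^K((l−1−r)h))`, the last block being `Δ^K ⊗ 𝓑^K(h)`;
`Θ1, Θ2` are the concatenations `[Δ^K ⊗ 𝓑^K(lh), …, Δ^K ⊗ 𝓑^K(h)]`. -/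
theorem fastControl_controllable
    (N n m p l : ℕ) (hl : 1 ≤ l)
    (A1 A2 : Matrix (Fin n) (Fin n) ℝ) (B1 B2 : Matrix (Fin n) (Fin p) ℝ)
    (C1 C2 : Matrix (Fin m) (Fin n) ℝ) (H1 H2 : Matrix (Fin n) (Fin m) ℝ)
    (W1 W2 : Matrix (Fin N) (Fin N) ℝ) (Δ1 Δ2 : Matrix (Fin N) (Fin N) ℝ)
    (hΔ1d : Δ1.IsDiag) (hΔ2d : Δ2.IsDiag)
    (hΔ1v : ∀ i, Δ1 i i = 0 ∨ Δ1 i i = 1) (hΔ2v : ∀ i, Δ2 i i = 0 ∨ Δ2 i i = 1)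
    (D21 : Matrix (Fin N) (Fin N) ℝ) (P21 : Matrix (Fin n) (Fin m) ℝ)
    (h : ℝ) (hh : 0 < h)
    -- lifted matrices
    (Φt11 Φt22 Φt21 : Matrix (Fin N × Fin n) (Fin N × Fin n) ℝ)
    (hΦt11 : Φt11 = (1 : Matrix (Fin N) (Fin N) ℝ) ⊗ₖ matExp (((l : ℝ) * h) • A1)
        + W1 ⊗ₖ (intExp A1 ((l : ℝ) * h) * H1 * C1))
    (hΦt22 : Φt22 = (1 : Matrix (Fin N) (Fin N) ℝ) ⊗ₖ matExp (((l : ℝ) * h) • A2)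
        + W2 ⊗ₖ (intExp A2 ((l : ℝ) * h) * H2 * C2))
    (hΦt21 : Φt21 = D21 ⊗ₖ (intExp A2 ((l : ℝ) * h) * P21 * C1))
    (Ψt11 Ψt22 : Matrix (Fin N × Fin n) (Fin l × (Fin N × Fin p)) ℝ)
    (hΨt11 : Ψt11 = Matrix.of fun a q =>
      if (q.1 : ℕ) = l - 1 then (Δ1 ⊗ₖ (intExp A1 h * B1)) a q.2
      else (Δ1 ⊗ₖ ((intExp A1 ((↑(l - (q.1 : ℕ)) : ℝ) * h)
        - intExp A1 ((↑(l - 1 - (q.1 : ℕ)) : ℝ) * h)) * B1)) a q.2)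
    (hΨt22 : Ψt22 = Matrix.of fun a q =>
      if (q.1 : ℕ) = l - 1 then (Δ2 ⊗ₖ (intExp A2 h * B2)) a q.2
      else (Δ2 ⊗ₖ ((intExp A2 ((↑(l - (q.1 : ℕ)) : ℝ) * h)
        - intExp A2 ((↑(l - 1 - (q.1 : ℕ)) : ℝ) * h)) * B2)) a q.2)
    -- concatenations [Δ^K ⊗ 𝓑^K(lh), Δ^K ⊗ 𝓑^K((l−1)h), …, Δ^K ⊗ 𝓑^K(h)]
    (Θ1 Θ2 : Matrix (Fin N × Fin n) (Fin l × (Fin N × Fin p)) ℝ)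
    (hΘ1 : Θ1 = Matrix.of fun a q =>
      (Δ1 ⊗ₖ (intExp A1 ((↑(l - (q.1 : ℕ)) : ℝ) * h) * B1)) a q.2)
    (hΘ2 : Θ2 = Matrix.of fun a q =>
      (Δ2 ⊗ₖ (intExp A2 ((↑(l - (q.1 : ℕ)) : ℝ) * h) * B2)) a q.2)
    -- condition (1)
    (cond1 : ∀ (μ : ℂ) (η : Fin N × Fin n → ℂ), η ≠ 0 →
      η ᵥ* cmap Φt11 = μ • η → η ᵥ* cmap Θ1 ≠ 0)
    -- condition (2)
    (cond2 : ∀ (μ : ℂ) (η ξ : Fin N × Fin n → ℂ), η ≠ 0 →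
      η ᵥ* cmap Φt22 = μ • η →
      ξ ᵥ* (μ • (1 : Matrix (Fin N × Fin n) (Fin N × Fin n) ℂ) - cmap Φt11)
        = η ᵥ* cmap Φt21 →
      Sum.elim (ξ ᵥ* cmap Θ1) (η ᵥ* cmap Θ2) ≠ 0) :
    Controllable (Matrix.fromBlocks Φt11 0 Φt21 Φt22)
      (Matrix.fromBlocks Ψt11 0 0 Ψt22) := by
  apply pbh_controllable
  intro μ η hη0 heig hG0
  -- split η into its two blocks
  set ξ : Fin N × Fin n → ℂ := η ∘ Sum.inl with hξdef
  set ζ : Fin N × Fin n → ℂ := η ∘ Sum.inr with hζdef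
  -- unpack the eigenvector equation
  have hF : cmap (Matrix.fromBlocks Φt11 0 Φt21 Φt22)
      = Matrix.fromBlocks (cmap Φt11) 0 (cmap Φt21) (cmap Φt22) := by
    rw [cmap, Matrix.fromBlocks_map]
    have h0 : (0 : Matrix (Fin N × Fin n) (Fin N × Fin n) ℝ).map Complex.ofReal = 0 := by
      ext i j; simp
    rw [h0]
    rfl
  rw [hF, Matrix.vecMul_fromBlocks] at heig
  have heig1 : ξ ᵥ* cmap Φt11 + ζ ᵥ* cmap Φt21 = μ • ξ := by
    ext a
    have := congrFun heig (Sum.inl a)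
    simp at this
    exact this
  have heig2 : ζ ᵥ* cmap Φt22 = μ • ζ := by
    ext a
    have := congrFun heig (Sum.inr a)
    simp [Matrix.vecMul_zero] at this
    exact this
  -- unpack the input annihilation
  have hG : cmap (Matrix.fromBlocks Ψt11 0 0 Ψt22)
      = Matrix.fromBlocks (cmap Ψt11) 0 0 (cmap Ψt22) := by
    rw [cmap, Matrix.fromBlocks_map]
    have h0 : (0 : Matrix (Fin N × Fin n) (Fin l × (Fin N × Fin p)) ℝ).map Complex.ofReal = 0 := by
      ext i j; simp
    rw [h0]
    rfl
  rw [hG, Matrix.vecMul_fromBlocks] at hG0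
  have hG1 : ξ ᵥ* cmap Ψt11 = 0 := by
    ext c
    have := congrFun hG0 (Sum.inl c)
    simpa [Matrix.vecMul_zero] using this
  have hG2 : ζ ᵥ* cmap Ψt22 = 0 := by
    ext c
    have := congrFun hG0 (Sum.inr c)
    simpa [Matrix.vecMul_zero] using this
  -- get Θ annihilation
  have hΘ1z : ξ ᵥ* cmap Θ1 = 0 := by
    rw [hΘ1]
    exact theta_zero_of_psi_zero hl A1 B1 Δ1 h ξ (by rw [← hΨt11]; exact hG1)
  have hΘ2z : ζ ᵥ* cmap Θ2 = 0 := by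
    rw [hΘ2]
    exact theta_zero_of_psi_zero hl A2 B2 Δ2 h ζ (by rw [← hΨt22]; exact hG2)
  by_cases hζ : ζ = 0
  · -- drive layer alone
    have hξ0 : ξ ≠ 0 := by
      intro hcon
      apply hη0
      ext i
      cases i with
      | inl a => exact congrFun hcon a
      | inr a => exact congrFun hζ a
    have heig1' : ξ ᵥ* cmap Φt11 = μ • ξ := by
      rw [← heig1, hζ, Matrix.zero_vecMul, add_zero]
    exact cond1 μ ξ hξ0 heig1' hΘ1z
  · -- response layer
    have hres : ξ ᵥ* (μ • (1 : Matrix (Fin N × Fin n) (Fin N × Fin n) ℂ) - cmap Φt11)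
        = ζ ᵥ* cmap Φt21 := by
      rw [Matrix.vecMul_sub]
      have h1 : ξ ᵥ* (μ • (1 : Matrix (Fin N × Fin n) (Fin N × Fin n) ℂ)) = μ • ξ := by
        ext a
        simp [Matrix.vecMul, dotProduct, Matrix.smul_apply, Matrix.one_apply,
          mul_ite, Finset.sum_ite_eq, mul_comm]
      rw [h1, ← heig1]
      abel
    have := cond2 μ ζ ξ hζ heig2 hres
    apply this
    ext i
    cases i with
    | inl c => simpa using congrFun hΘ1z c
    | inr c => simpa using congrFun hΘ2z c
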